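/- Let G be a graph whose end space Ω(G) is Lindelöf, and let (F_n : n ∈ ω) be a strictly ⊆-increasing sequence of finite subsets of V(G). Then there exists a sequence (ℱ_n : n ∈ ω) such that each ℱ_n is a finite collection of connected components of G \ F_n and every ray of G has a tail in some member of ⋃_n ℱ_n. -/

import Mathlib

open Set Cardinal SimpleGraph Topology

/-- The topology on the end space of a graph `G`: basic open sets are obtained by
fixing the connected component (of the complement of a finite vertex set) in which
the end lives. -/
def endTopology {V : Type*} (G : SimpleGraph V) : TopologicalSpace G.end :=
  TopologicalSpace.generateFrom
    {S | ∃ (K : Finset V) (C : G.ComponentCompl K),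
      S = {e : G.end | e.val (Opposite.op K) = C}}

/-- The component `C` of `G ∖ K` contains a ray. -/
def ComponentContainsRay {V : Type*} (G : SimpleGraph V) {K : Finset V}
    (C : G.ComponentCompl K) : Prop :=
  ∃ f : ℕ → V, Function.Injective f ∧ (∀ n : ℕ, G.Adj (f n) (f (n + 1))) ∧ ∀ n : ℕ, f n ∈ C

section Aux

open Opposite CategoryTheory

variable {V : Type*} {G : SimpleGraph V}

lemma aux_chain_mk (G : SimpleGraph V) {K : Set V} (f : ℕ → V)
    (hadj : ∀ n, G.Adj (f n) (f (n+1))) {N : ℕ} (hN : ∀ m, N ≤ m → f m ∉ K)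
    {m : ℕ} (hm : N ≤ m) :
    G.componentComplMk (hN m hm) = G.componentComplMk (hN N le_rfl) := by
  induction m, hm using Nat.le_induction with
  | base => rfl
  | succ m hm ih =>
    rw [← ih]
    exact (G.componentComplMk_eq_of_adj (hN m hm) (hN (m+1) (by omega)) (hadj m)).symm

/-- The component of an end outside a finite vertex set. -/
def auxEndComp (e : G.end) (K : Finset V) : G.ComponentCompl (K : Set V) := e.val (op K)

lemma aux_end_of_ray (G : SimpleGraph V) (f : ℕ → V) (hinj : Function.Injective f)
    (hadj : ∀ n, G.Adj (f n) (f (n+1))) :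
    ∃ e : G.end, ∀ K : Finset V, ∃ N : ℕ, ∀ m, N ≤ m → f m ∈ auxEndComp e K := by
  have key : ∀ K : Finset V, ∃ N : ℕ, ∀ m, N ≤ m → f m ∉ (K : Set V) := by
    intro K
    have hfin : (f ⁻¹' (K : Set V)).Finite :=
      Set.Finite.preimage (hinj.injOn) K.finite_toSet
    obtain ⟨B, hB⟩ := hfin.bddAbove
    exact ⟨B + 1, fun m hm hmem => by
      have := hB hmem; omega⟩
  choose N hN using key
  refine ⟨⟨fun K => G.componentComplMk (hN K.unop (N K.unop) le_rfl), ?_⟩, ?_⟩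
  · intro i j g
    have hsub : (j.unop : Set V) ⊆ (i.unop : Set V) := by
      exact_mod_cast le_of_op_hom g
    have hij : ∀ m, N i.unop ≤ m → f m ∉ (j.unop : Set V) :=
      fun m hm hmem => hN i.unop m hm (hsub hmem)
    simp only [componentComplFunctor_map]
    show ComponentCompl.hom hsub (G.componentComplMk _) = G.componentComplMk _
    rw [ComponentCompl.hom_mk _]
    have h1 := aux_chain_mk G f hadj hij (le_max_left (N i.unop) (N j.unop))
    have h2 := aux_chain_mk G f hadj (hN j.unop) (le_max_right (N i.unop) (N j.unop))
    exact h1 ▸ h2 ▸ rfl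
  · intro K
    refine ⟨N K, fun m hm => ?_⟩
    show f m ∈ G.componentComplMk (hN K (N K) le_rfl)
    rw [← aux_chain_mk G f hadj (hN K) hm]
    exact G.componentComplMk_mem (hN K m hm)

lemma aux_walk_transfer {K L : Set V} {C : G.ComponentCompl K}
    (hdis : ∀ v ∈ (C : Set V), v ∉ L) :
    ∀ (a b : ↑Kᶜ) (_ : (G.induce Kᶜ).Walk a b), G.componentComplMk a.prop = C →
      ∀ (ha : (a : V) ∉ L), (b : V) ∈ G.componentComplMk ha := by
  intro a b p
  induction p with
  | nil => exact fun h ha => G.componentComplMk_mem ha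
  | @cons u v w h q ih =>
    intro hu huL
    have hvC : (v : V) ∈ C :=
      ComponentCompl.mem_of_adj (u : V) (v : V) ⟨u.prop, hu⟩ v.prop h
    have hvL : (v : V) ∉ L := hdis _ hvC
    obtain ⟨hvK, hvmk⟩ := hvC
    have := ih hvmk hvL
    rwa [G.componentComplMk_eq_of_adj huL hvL h]

lemma aux_comp_unique {K L : Set V} (hKL : K ⊆ L) {C : G.ComponentCompl K}
    (hdis : ∀ v ∈ (C : Set V), v ∉ L) {D D' : G.ComponentCompl L}
    (hD : D.hom hKL = C) (hD' : D'.hom hKL = C) : D = D' := by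
  obtain ⟨v, hvL, hv⟩ := D.exists_eq_mk
  obtain ⟨w, hwL, hw⟩ := D'.exists_eq_mk
  have hvD : v ∈ D := hv ▸ G.componentComplMk_mem hvL
  have hwD' : w ∈ D' := hw ▸ G.componentComplMk_mem hwL
  have hvC : v ∈ C := hD ▸ D.subset_hom hKL hvD
  have hwC : w ∈ C := hD' ▸ D'.subset_hom hKL hwD'
  obtain ⟨hvK, hvmk⟩ := hvC
  obtain ⟨hwK, hwmk⟩ := hwC
  obtain ⟨p⟩ : (G.induce Kᶜ).Reachable ⟨v, hvK⟩ ⟨w, hwK⟩ :=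
    SimpleGraph.ConnectedComponent.eq.mp (hvmk.trans hwmk.symm)
  have hmem := aux_walk_transfer hdis ⟨v, hvK⟩ ⟨w, hwK⟩ p hvmk hvL
  obtain ⟨hwL', hwe⟩ := hmem
  rw [← hv, ← hw, ← hwe]

lemma aux_finite_meeting (K : Set V) (Fn : Finset V) :
    {C : G.ComponentCompl K | ((C : Set V) ∩ (Fn : Set V)).Nonempty}.Finite := by
  set S := {C : G.ComponentCompl K | ((C : Set V) ∩ (Fn : Set V)).Nonempty} with hS
  have h : ∀ C ∈ S, ∃ v, v ∈ (C : Set V) ∩ (Fn : Set V) := fun C hC => hC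
  choose φ hφ using h
  rw [← Set.finite_coe_iff]
  have : Finite (Fn : Set V) := Fn.finite_toSet
  refine Finite.of_injective (fun x : S => (⟨φ x.1 x.2, (hφ x.1 x.2).2⟩ : (Fn : Set V))) ?_
  rintro ⟨C, hC⟩ ⟨D, hD⟩ he
  simp only [Subtype.mk.injEq] at he ⊢
  by_contra hne
  exact (Set.disjoint_iff.mp (ComponentCompl.pairwise_disjoint hne))
    ⟨(hφ C hC).1, he ▸ (hφ D hD).1⟩

lemma aux_window_exists (a : ℕ → ℕ) (h0 : a 0 = 0) (hlt : ∀ n, a n < a (n+1)) (k : ℕ) :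
    ∃ n, a n ≤ k ∧ k < a (n+1) := by
  induction k with
  | zero => refine ⟨0, h0.le, ?_⟩; have := hlt 0; omega
  | succ k ih =>
    obtain ⟨n, h1, h2⟩ := ih
    by_cases hc : k + 1 < a (n+1)
    · exact ⟨n, by omega, hc⟩
    · exact ⟨n+1, by omega, by have := hlt (n+1); omega⟩

end Aux

/-- If the end space `Ω(G)` is Lindelöf and `(F n : n ∈ ω)` is a strictly `⊆`-increasing
sequence of finite sets of vertices, then there is a sequence `(ℱ n : n ∈ ω)` such that
each `ℱ n` is a finite collection of connected components of `G ∖ F n` and every ray of `G`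
has a tail in some member of `⋃ n, ℱ n`. -/
theorem lindelof_imp_property_F {V : Type*} (G : SimpleGraph V)
    (hL : ∀ 𝒰 : Set (Set G.end), (∀ U ∈ 𝒰, IsOpen[endTopology G] U) →
      ⋃₀ 𝒰 = Set.univ → ∃ 𝒱 ⊆ 𝒰, 𝒱.Countable ∧ ⋃₀ 𝒱 = Set.univ)
    (F : ℕ → Finset V) (hmono : ∀ n : ℕ, F n ⊂ F (n + 1)) :
    ∃ ℱ : ∀ n : ℕ, Set (G.ComponentCompl (F n)), (∀ n, (ℱ n).Finite) ∧
      ∀ f : ℕ → V, Function.Injective f → (∀ n : ℕ, G.Adj (f n) (f (n + 1))) →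
        ∃ n : ℕ, ∃ C ∈ ℱ n, ∃ N : ℕ, ∀ m : ℕ, N ≤ m → f m ∈ C := by
  classical
  open Opposite CategoryTheory in
  -- monotonicity of `F`
  have hmF : Monotone F := monotone_nat_of_le_succ (fun n => (hmono n).subset)
  have hsub : ∀ n, ((F 0 : Finset V) : Set V) ⊆ ((F n : Finset V) : Set V) :=
    fun n => Finset.coe_subset.mpr (hmF (Nat.zero_le n))
  -- the set of components of `G ∖ F 0` containing an end is countable
  set S : Set (G.ComponentCompl ((F 0 : Finset V) : Set V)) :=
    {C | ∃ e : G.end, auxEndComp e (F 0) = C} with hSdef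
  have hScount : S.Countable := by
    set 𝒰 : Set (Set G.end) :=
      {U | ∃ C : G.ComponentCompl ((F 0 : Finset V) : Set V),
        U = {e : G.end | auxEndComp e (F 0) = C}} with h𝒰def
    have hopen : ∀ U ∈ 𝒰, IsOpen[endTopology G] U := by
      rintro U ⟨C, rfl⟩
      exact TopologicalSpace.GenerateOpen.basic _ ⟨F 0, C, rfl⟩
    have hcover : ⋃₀ 𝒰 = Set.univ := by
      rw [Set.eq_univ_iff_forall]
      intro e
      exact ⟨{e' : G.end | auxEndComp e' (F 0) = auxEndComp e (F 0)},
        ⟨auxEndComp e (F 0), rfl⟩, rfl⟩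
    obtain ⟨𝒱, h𝒱𝒰, h𝒱c, h𝒱u⟩ := hL 𝒰 hopen hcover
    have hch : ∀ U ∈ 𝒱, ∃ C, U = {e : G.end | auxEndComp e (F 0) = C} :=
      fun U hU => h𝒱𝒰 hU
    choose g hg using hch
    have : S ⊆ Set.range (fun x : 𝒱 => g x.1 x.2) := by
      rintro C ⟨e, he⟩
      have : e ∈ ⋃₀ 𝒱 := h𝒱u ▸ Set.mem_univ e
      obtain ⟨U, hU, heU⟩ := this
      rw [hg U hU] at heU
      exact ⟨⟨U, hU⟩, heU.symm.trans he⟩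
    have : Countable 𝒱 := h𝒱c.to_subtype
    exact (Set.countable_range _).mono ‹S ⊆ _›
  obtain ⟨ι, hι⟩ := Set.countable_iff_exists_injective.mp hScount
  -- bounds on indices of components meeting `F n`
  have hT : ∀ n : ℕ, ∃ B : ℕ, ∀ x : S,
      (((x : G.ComponentCompl ((F 0 : Finset V) : Set V)) : Set V) ∩
        ((F n : Finset V) : Set V)).Nonempty → ι x ≤ B := by
    intro n
    have hfin : {k : ℕ | ∃ x : S, ι x = k ∧
        (((x : G.ComponentCompl ((F 0 : Finset V) : Set V)) : Set V) ∩
          ((F n : Finset V) : Set V)).Nonempty}.Finite := by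
      have h1 := aux_finite_meeting (G := G) ((F 0 : Finset V) : Set V) (F n)
      have h2 : (Subtype.val ⁻¹'
          {C : G.ComponentCompl ((F 0 : Finset V) : Set V) |
            ((C : Set V) ∩ ((F n : Finset V) : Set V)).Nonempty} : Set S).Finite :=
        h1.preimage (Subtype.val_injective.injOn)
      refine (h2.image ι).subset ?_
      rintro k ⟨x, rfl, hx⟩
      exact ⟨x, hx, rfl⟩
    obtain ⟨B, hB⟩ := hfin.bddAbove
    exact ⟨B, fun x hx => hB ⟨x, rfl, hx⟩⟩
  choose B hB using hT
  -- the sequence of window bounds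
  set a : ℕ → ℕ := fun n => Nat.rec 0 (fun n an => max (an + 1) (B (n+1) + 1)) n with hadef
  have ha0 : a 0 = 0 := rfl
  have halt : ∀ n, a n < a (n+1) := fun n =>
    lt_of_lt_of_le (Nat.lt_succ_self _) (le_max_left _ _)
  have haB : ∀ n, B (n+1) < a (n+1) := fun n =>
    lt_of_lt_of_le (Nat.lt_succ_self _) (le_max_right _ _)
  -- disjointness from `F n` on the window
  have hdisj : ∀ n (x : S), a n ≤ ι x →
      ∀ v ∈ ((x : G.ComponentCompl ((F 0 : Finset V) : Set V)) : Set V),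
        v ∉ ((F n : Finset V) : Set V) := by
    intro n x hax v hv hvF
    match n with
    | 0 => exact ComponentCompl.notMem_of_mem hv hvF
    | n+1 =>
      have := hB (n+1) x ⟨v, hv, hvF⟩
      have := haB n
      omega
  -- definition of ℱ
  refine ⟨fun n => {D : G.ComponentCompl ((F n : Finset V) : Set V) |
    ∃ x : S, D.hom (hsub n) = (x : G.ComponentCompl ((F 0 : Finset V) : Set V)) ∧
      a n ≤ ι x ∧ ι x < a (n+1)}, ?_, ?_⟩
  · -- finiteness
    intro n
    rw [← Set.finite_coe_iff]
    have hfin : Finite ↑(Set.Ico (a n) (a (n+1))) := Set.finite_Ico _ _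
    refine Finite.of_injective
      (fun d => (⟨ι d.2.choose, d.2.choose_spec.2.1, d.2.choose_spec.2.2⟩ :
        ↑(Set.Ico (a n) (a (n+1))))) ?_
    rintro ⟨D, hD⟩ ⟨D', hD'⟩ he
    have hx := hD.choose_spec
    have hx' := hD'.choose_spec
    have hxx : hD.choose = hD'.choose := hι (congrArg Subtype.val he)
    rw [hxx] at hx
    have hdis := hdisj n hD'.choose hx'.2.1
    exact Subtype.ext (aux_comp_unique (hsub n) hdis hx.1 hx'.1)
  · -- coverage of rays
    intro f hfinj hfadj
    obtain ⟨e, he⟩ := aux_end_of_ray G f hfinj hfadj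
    have hCS : auxEndComp e (F 0) ∈ S := ⟨e, rfl⟩
    obtain ⟨n, h1, h2⟩ := aux_window_exists a ha0 halt (ι ⟨auxEndComp e (F 0), hCS⟩)
    refine ⟨n, auxEndComp e (F n), ⟨⟨auxEndComp e (F 0), hCS⟩, ?_, h1, h2⟩, he (F n)⟩
    have := e.prop (opHomOfLE (hmF (Nat.zero_le n)) : op (F n) ⟶ op (F 0))
    exact this
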